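/- Let f : ℝⁿ → ℝ be differentiable and satisfy the α-Polyak–Łojasiewicz condition (1/2)‖∇f(x)‖₂² ≥ α(f(x) - f*) for all x, where f* = min f is attained. Then for every x there exists a global minimizer x* of f with f(x) - f* ≥ (α/2)‖x - x*‖₂². -/

import Mathlib

open Filter Topology InnerProductSpace

lemma ekeland' {X : Type*} [MetricSpace X] [CompleteSpace X]
    (g : X → ℝ) (hg : Continuous g) (hg0 : ∀ z, 0 ≤ g z)
    {δ : ℝ} (hδ : 0 < δ) (x₀ : X) :
    ∃ y, δ * dist x₀ y ≤ g x₀ - g y ∧ ∀ z, g y ≤ g z + δ * dist y z := by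
  set P : X → X → Prop := fun u z => g z + δ * dist u z ≤ g u with hP
  have hrefl : ∀ u, P u u := by intro u; simp [hP]
  have htrans : ∀ u z w, P u z → P z w → P u w := by
    intro u z w h1 h2
    have htri : dist u w ≤ dist u z + dist z w := dist_triangle u z w
    have : δ * dist u w ≤ δ * (dist u z + dist z w) := by
      apply mul_le_mul_of_nonneg_left htri hδ.le
    nlinarith [h1, h2]
  -- the value m u = inf of g over successors of u
  have hne : ∀ u : X, (g '' {z | P u z}).Nonempty := fun u => ⟨g u, u, hrefl u, rfl⟩
  have hbdd : ∀ u : X, BddBelow (g '' {z | P u z}) := by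
    intro u; exact ⟨0, by rintro a ⟨z, -, rfl⟩; exact hg0 z⟩
  set m : X → ℝ := fun u => sInf (g '' {z | P u z}) with hm
  have hstep : ∀ (u : X) (n : ℕ), ∃ z, P u z ∧ g z < m u + (1/2)^n := by
    intro u n
    obtain ⟨a, ⟨z, hz, rfl⟩, ha⟩ := Real.lt_sInf_add_pos (hne u) (by positivity : (0:ℝ) < (1/2)^n)
    exact ⟨z, hz, ha⟩
  choose step hstep1 hstep2 using hstep
  set x : ℕ → X := fun n => Nat.rec x₀ (fun n u => step u n) n with hx
  have hx0 : x 0 = x₀ := rfl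
  have hxs : ∀ n, x (n+1) = step (x n) n := fun n => rfl
  have hPx : ∀ n, P (x n) (x (n+1)) := fun n => hstep1 (x n) n
  have hchain : ∀ n k, P (x n) (x (n+k)) := by
    intro n k
    induction k with
    | zero => exact hrefl _
    | succ k ih => exact htrans _ _ _ ih (hPx (n+k))
  have hchain' : ∀ n k, n ≤ k → P (x n) (x k) := by
    intro n k h
    obtain ⟨j, rfl⟩ := Nat.exists_eq_add_of_le h
    exact hchain n j
  have hanti : ∀ n k, n ≤ k → g (x k) ≤ g (x n) := by
    intro n k h
    have := hchain' n k h
    nlinarith [dist_nonneg (x := x n) (y := x k), this]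
  -- g (x n) converges
  have hmono : Antitone (fun n => g (x n)) := antitone_nat_of_succ_le fun n => hanti n (n+1) (Nat.le_succ n)
  have hbdd2 : BddBelow (Set.range fun n => g (x n)) := ⟨0, by rintro a ⟨n, rfl⟩; exact hg0 _⟩
  have hL := tendsto_atTop_ciInf hmono hbdd2
  have hgc : CauchySeq (fun n => g (x n)) := hL.cauchySeq
  have hxc : CauchySeq x := by
    rw [Metric.cauchySeq_iff]
    intro ε hε
    rw [Metric.cauchySeq_iff] at hgc
    obtain ⟨N, hN⟩ := hgc (δ * ε) (by positivity)
    refine ⟨N, fun p hp q hq => ?_⟩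
    rcases le_total p q with h | h
    · have h1 := hchain' p q h
      have h2 := hN p hp q hq
      rw [Real.dist_eq] at h2
      have : δ * dist (x p) (x q) ≤ g (x p) - g (x q) := by nlinarith [h1]
      have h3 : δ * dist (x p) (x q) < δ * ε :=
        lt_of_le_of_lt this (lt_of_le_of_lt (le_abs_self _) h2)
      exact lt_of_mul_lt_mul_left h3 hδ.le
    · have h1 := hchain' q p h
      have h2 := hN q hq p hp
      rw [Real.dist_eq] at h2
      have : δ * dist (x q) (x p) ≤ g (x q) - g (x p) := by nlinarith [h1]
      have h3 : δ * dist (x q) (x p) < δ * ε :=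
        lt_of_le_of_lt this (lt_of_le_of_lt (le_abs_self _) h2)
      rw [dist_comm (x p) (x q)]
      exact lt_of_mul_lt_mul_left h3 hδ.le
  obtain ⟨y, hy⟩ := cauchySeq_tendsto_of_complete hxc
  have hPy : ∀ n, P (x n) y := by
    intro n
    have htend : Tendsto (fun k => g (x k) + δ * dist (x n) (x k)) atTop
        (𝓝 (g y + δ * dist (x n) y)) := by
      exact ((hg.continuousAt.tendsto.comp hy).add
        (((continuous_const.dist continuous_id).continuousAt.tendsto.comp hy).const_mul δ))
    refine le_of_tendsto htend ?_
    filter_upwards [eventually_ge_atTop n] with k hk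
    exact hchain' n k hk
  refine ⟨y, ?_, ?_⟩
  · have := hPy 0; rw [hx0] at this; linarith [this]
  · intro z
    by_contra hcon
    push_neg at hcon
    have hmz : ∀ n, m (x n) ≤ g z := by
      intro n
      apply csInf_le (hbdd _)
      refine ⟨z, ?_, rfl⟩
      have h1 : P y z := by
        have : δ * dist y z ≥ 0 := by positivity
        simp only [hP, Set.mem_setOf_eq]
        nlinarith
      exact htrans _ _ _ (hPy n) h1
    have hyz : ∀ n : ℕ, g y ≤ g z + (1/2)^n := by
      intro n
      have h1 : g y ≤ g (x (n+1)) := by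
        have := hPy (n+1); nlinarith [dist_nonneg (x := x (n+1)) (y := y)]
      have h2 := hstep2 (x n) n
      rw [← hxs n] at h2
      linarith [hmz n]
    have : g y ≤ g z := by
      refine le_of_forall_pos_le_add fun ε hε => ?_
      obtain ⟨n, hn⟩ := exists_pow_lt_of_lt_one hε (by norm_num : (1:ℝ)/2 < 1)
      linarith [hyz n]
    nlinarith [dist_nonneg (x := y) (y := z)]

/-- Quadratic growth from the PL condition: if `f` is differentiable, attains its minimum
at `xstar`, and satisfies the `α`-PL condition, then for every `x` there is a global
minimizer `xm` with `f(x) - f* ≥ (α/2)‖x - xm‖²`. -/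
theorem pl_quadratic_growth (n : ℕ) (α : ℝ) (hα : 0 < α)
    (f : EuclideanSpace ℝ (Fin n) → ℝ) (hdiff : Differentiable ℝ f)
    (xstar : EuclideanSpace ℝ (Fin n)) (hmin : ∀ y, f xstar ≤ f y)
    (hPL : ∀ x, (1 / 2) * ‖gradient f x‖ ^ 2 ≥ α * (f x - f xstar)) :
    ∀ x, ∃ xm : EuclideanSpace ℝ (Fin n),
      (∀ y, f xm ≤ f y) ∧ f x - f xstar ≥ α / 2 * ‖x - xm‖ ^ 2 := by
  intro x
  set fs := f xstar with hfs
  set g : EuclideanSpace ℝ (Fin n) → ℝ := fun z => Real.sqrt (f z - fs) with hg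
  have hgc : Continuous g := (hdiff.continuous.sub continuous_const).sqrt
  have hg0 : ∀ z, 0 ≤ g z := fun z => Real.sqrt_nonneg _
  set S : Set (EuclideanSpace ℝ (Fin n)) := {z | f z = fs} with hS
  have hScl : IsClosed S := isClosed_eq hdiff.continuous continuous_const
  have hSne : S.Nonempty := ⟨xstar, rfl⟩
  obtain ⟨xm, hxmS, hdm⟩ := hScl.exists_infDist_eq_dist hSne x
  set c := Real.sqrt (α / 2) with hc
  have hcpos : 0 < c := Real.sqrt_pos.mpr (by linarith)
  -- main claim
  have key : ∀ δ : ℝ, 0 < δ → δ < c → Metric.infDist x S * δ ≤ Real.sqrt (f x - fs) := by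
    intro δ hδ hδc
    obtain ⟨y, hy1, hy2⟩ := ekeland' g hgc hg0 hδ x
    have hyS : f y = fs := by
      by_contra hne
      have hlt : fs < f y := lt_of_le_of_ne (hmin y) (Ne.symm hne)
      set b := Real.sqrt (f y - fs) with hb
      have hbpos : 0 < b := Real.sqrt_pos.mpr (by linarith)
      have hbsq : b ^ 2 = f y - fs := Real.sq_sqrt (by linarith)
      set G := gradient f y with hGdef
      have hG : HasGradientAt f G y := (hdiff y).hasGradientAt
      have hPLy : ‖G‖ ^ 2 ≥ 2 * α * b ^ 2 := by
        have := hPL y; rw [hbsq]; linarith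
      have hGne : G ≠ 0 := by
        intro h0
        rw [h0] at hPLy; simp at hPLy
        nlinarith
      have hGpos : 0 < ‖G‖ := norm_pos_iff.mpr hGne
      -- curve
      set cv : ℝ → EuclideanSpace ℝ (Fin n) := fun s => y + s • (-G) with hcv
      have hcv0 : cv 0 = y := by simp [hcv]
      have hcvd : HasDerivAt cv (-G) 0 := by
        have h1 : HasDerivAt (fun s : ℝ => s • (-G)) ((1:ℝ) • (-G)) 0 :=
          (hasDerivAt_id 0).smul_const (-G)
        have h2 := h1.const_add y
        rw [one_smul] at h2
        exact h2
      have hfc : HasDerivAt (fun s => f (cv s)) (-(‖G‖ ^ 2)) 0 := by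
        have hGy : HasFDerivAt f (toDual ℝ (EuclideanSpace ℝ (Fin n)) G) (cv 0) := by
          rw [hcv0]; exact hG.hasFDerivAt
        have h2 := hGy.comp_hasDerivAt 0 hcvd
        have h3 : (toDual ℝ (EuclideanSpace ℝ (Fin n)) G) (-G) = -(‖G‖ ^ 2) := by
          rw [toDual_apply_apply, inner_neg_right, real_inner_self_eq_norm_sq]
        rwa [h3] at h2
      have hφ : HasDerivAt (fun s => f (cv s) - fs) (-(‖G‖ ^ 2)) 0 := hfc.sub_const fs
      have hφ0 : f (cv 0) - fs = f y - fs := by rw [hcv0]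
      have hsq : HasDerivAt (fun s => g (cv s)) (1 / (2 * b) * (-(‖G‖ ^ 2))) 0 := by
        have h4 : HasDerivAt Real.sqrt (1 / (2 * Real.sqrt (f (cv 0) - fs))) (f (cv 0) - fs) :=
          Real.hasDerivAt_sqrt (by rw [hφ0]; linarith)
        have h5 := h4.comp 0 hφ
        rw [hφ0] at h5
        convert h5 using 2
        all_goals rfl
      -- slope lower bound
      have hslope : ∀ s : ℝ, 0 < s → -(δ * ‖G‖) ≤ (g (cv s) - g (cv 0)) / s := by
        intro s hs
        have h6 := hy2 (cv s)
        have hdist : dist y (cv s) = s * ‖G‖ := by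
          rw [dist_eq_norm]
          simp only [hcv]
          rw [show y - (y + s • (-G)) = s • G by abel_nf; module]
          rw [norm_smul, Real.norm_eq_abs, abs_of_pos hs]
        rw [hdist] at h6
        rw [hcv0, le_div_iff₀ hs]
        nlinarith
      have hderiv_ge : -(δ * ‖G‖) ≤ 1 / (2 * b) * (-(‖G‖ ^ 2)) := by
        have htend : Tendsto (slope (fun s => g (cv s)) 0) (𝓝[>] 0)
            (𝓝 (1 / (2 * b) * (-(‖G‖ ^ 2)))) :=
          (hasDerivAt_iff_tendsto_slope.mp hsq).mono_left
            (nhdsWithin_mono 0 (fun s hs => ne_of_gt hs))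
        refine ge_of_tendsto htend ?_
        filter_upwards [self_mem_nhdsWithin] with s hs
        have heq : slope (fun s => g (cv s)) 0 s = (g (cv s) - g (cv 0)) / s := by
          rw [slope_def_field, sub_zero]
        rw [heq]
        exact hslope s hs

      -- contradiction
      have hGle : ‖G‖ ≤ 2 * δ * b := by
        have h7 : ‖G‖ ^ 2 / (2 * b) ≤ δ * ‖G‖ := by
          have := hderiv_ge
          have h8 : 1 / (2 * b) * (‖G‖ ^ 2) ≤ δ * ‖G‖ := by linarith
          calc ‖G‖ ^ 2 / (2 * b) = 1 / (2 * b) * ‖G‖ ^ 2 := by ring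
          _ ≤ δ * ‖G‖ := h8
        rw [div_le_iff₀ (by linarith : (0:ℝ) < 2 * b)] at h7
        nlinarith
      have : α / 2 ≤ δ ^ 2 := by nlinarith
      have h9 : c ≤ δ := by
        calc c ≤ Real.sqrt (δ ^ 2) := Real.sqrt_le_sqrt this
        _ = δ := by rw [Real.sqrt_sq hδ.le]
      linarith
    have hgy : g y = 0 := by simp [hg, hyS]
    have hd1 : Metric.infDist x S ≤ dist x y := Metric.infDist_le_dist_of_mem hyS
    have hgx : g x = Real.sqrt (f x - fs) := rfl
    calc Metric.infDist x S * δ ≤ dist x y * δ := by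
          exact mul_le_mul_of_nonneg_right hd1 hδ.le
    _ = δ * dist x y := by ring
    _ ≤ g x - g y := hy1
    _ = Real.sqrt (f x - fs) := by rw [hgy, hgx]; ring
  -- pass to δ → c
  have key2 : Metric.infDist x S * c ≤ Real.sqrt (f x - fs) := by
    by_contra hcon
    push_neg at hcon
    set d := Metric.infDist x S with hd
    have hd0 : 0 ≤ d := Metric.infDist_nonneg
    have hE0 : 0 ≤ Real.sqrt (f x - fs) := Real.sqrt_nonneg _
    have hdpos : 0 < d := by
      rcases eq_or_lt_of_le hd0 with h | h
      · rw [← h] at hcon; simp at hcon; linarith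
      · exact h
    have hq : Real.sqrt (f x - fs) / d < c := by
      rw [div_lt_iff₀ hdpos]; linarith [hcon]
    set δ := (Real.sqrt (f x - fs) / d + c) / 2 with hδdef
    have hδ1 : Real.sqrt (f x - fs) / d < δ := by rw [hδdef]; linarith
    have hδ2 : δ < c := by rw [hδdef]; linarith
    have hδpos : 0 < δ := lt_of_le_of_lt (by positivity) hδ1
    have hkd := key δ hδpos hδ2
    have : δ ≤ Real.sqrt (f x - fs) / d := by
      rw [le_div_iff₀ hdpos, mul_comm]
      exact hkd
    linarith
  -- conclude
  refine ⟨xm, fun y => hxmS ▸ hmin y, ?_⟩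
  have hEnn : 0 ≤ f x - fs := by linarith [hmin x]
  have hcsq : c ^ 2 = α / 2 := Real.sq_sqrt (by linarith)
  have hnorm : ‖x - xm‖ = Metric.infDist x S := by rw [hdm, dist_eq_norm]
  have hdc0 : 0 ≤ Metric.infDist x S * c := mul_nonneg Metric.infDist_nonneg hcpos.le
  have h10 : (Metric.infDist x S * c) ^ 2 ≤ f x - fs := by
    calc (Metric.infDist x S * c) ^ 2 ≤ Real.sqrt (f x - fs) ^ 2 :=
          pow_le_pow_left₀ hdc0 key2 2
    _ = f x - fs := Real.sq_sqrt hEnn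
  have heq : α / 2 * Metric.infDist x S ^ 2 = (Metric.infDist x S * c) ^ 2 := by
    rw [mul_pow, hcsq]; ring
  rw [ge_iff_le, hnorm, heq]
  exact h10
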